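/- In the unlearning setup with coherence definitions, for every integer k ≥ 1 the noise-accumulation matrices satisfy Tr(N_k) ≥ (1/(n_r n_f))² (1/d) 2^{−k} (√C_r + √C_f)^{2k} ( Σ_{r=1}^{n_r} Σ_{f=1}^{n_f} Tr(D_{rf}^k) )². -/

import Mathlib

open Matrix Filter Finset Set
open scoped BigOperators

noncomputable section

/-- Frobenius norm of a real square matrix. -/
def frob {n : Type*} [Fintype n] (M : Matrix n n ℝ) : ℝ :=
  Real.sqrt (∑ i, ∑ j, (M i j) ^ 2)

open Classical in
/-- The positive semidefinite square root of a matrix (junk value `0` on non-PSD input). -/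
def psdSqrt {n : Type*} [Fintype n] [DecidableEq n] (A : Matrix n n ℝ) : Matrix n n ℝ :=
  if h : A.PosSemidef then
    (h.1.eigenvectorUnitary : Matrix n n ℝ) *
      diagonal ((RCLike.ofReal : ℝ → ℝ) ∘ (Real.sqrt ∘ h.1.eigenvalues)) *
      (star h.1.eigenvectorUnitary : Matrix n n ℝ)
  else 0

open Classical in
/-- The largest eigenvalue of a symmetric real matrix (junk value `0` otherwise). -/
def lamMax {n : Type*} [Fintype n] [DecidableEq n] (A : Matrix n n ℝ) : ℝ :=
  if h : A.IsHermitian then ⨆ i, h.eigenvalues i else 0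

/-- Probability of observing the Bernoulli(B/n) selection pattern `x`. -/
def selProb (n B : ℕ) (x : Fin n → Bool) : ℝ :=
  ∏ i, if x i then (B : ℝ) / n else 1 - (B : ℝ) / n

/-- Average Hessian of a family. -/
def Hbar {d n : ℕ} (H : Fin n → Matrix (Fin d) (Fin d) ℝ) : Matrix (Fin d) (Fin d) ℝ :=
  (n : ℝ)⁻¹ • ∑ i, H i

/-- Mean update operator `J = I − η(1−α)H_R + ηα H_F`. -/
def Jbar {d nr nf : ℕ} (η α : ℝ) (HR : Fin nr → Matrix (Fin d) (Fin d) ℝ)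
    (HF : Fin nf → Matrix (Fin d) (Fin d) ℝ) : Matrix (Fin d) (Fin d) ℝ :=
  1 - (η * (1 - α)) • Hbar HR + (η * α) • Hbar HF

/-- Random update operator for the batch-selection pattern `x`. -/
def Jop {d nr nf : ℕ} (η α : ℝ) (B : ℕ) (HR : Fin nr → Matrix (Fin d) (Fin d) ℝ)
    (HF : Fin nf → Matrix (Fin d) (Fin d) ℝ)
    (x : (Fin nr → Bool) × (Fin nf → Bool)) : Matrix (Fin d) (Fin d) ℝ :=
  1 - (η * (1 - α) / B) • (∑ r, if x.1 r then HR r else 0)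
    + (η * α / B) • (∑ f, if x.2 f then HF f else 0)

/-- `C_r = η²(1−α)²(1/n_r)(1/B − 1/n_r)`. -/
def Crc (η α : ℝ) (B nr : ℕ) : ℝ :=
  η ^ 2 * (1 - α) ^ 2 * (nr : ℝ)⁻¹ * ((B : ℝ)⁻¹ - (nr : ℝ)⁻¹)

/-- `C_f = η²α²(1/n_f)(1/B − 1/n_f)`. -/
def Cfc (η α : ℝ) (B nf : ℕ) : ℝ :=
  η ^ 2 * α ^ 2 * (nf : ℝ)⁻¹ * ((B : ℝ)⁻¹ - (nf : ℝ)⁻¹)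

/-- Noise-accumulation matrices `N_k`. -/
def Nmat {d nr nf : ℕ} (η α : ℝ) (B : ℕ) (HR : Fin nr → Matrix (Fin d) (Fin d) ℝ)
    (HF : Fin nf → Matrix (Fin d) (Fin d) ℝ) : ℕ → Matrix (Fin d) (Fin d) ℝ
  | 0 => 1
  | k + 1 =>
      Cfc η α B nf • ∑ f, HF f * Nmat η α B HR HF k * HF f
        + Crc η α B nr • ∑ r, HR r * Nmat η α B HR HF k * HR r

/-- `W_k = J_{k−1} ⋯ J_1 J_0` for a finite sequence of batch selections. -/
def Wk {d nr nf : ℕ} (η α : ℝ) (B : ℕ) (HR : Fin nr → Matrix (Fin d) (Fin d) ℝ)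
    (HF : Fin nf → Matrix (Fin d) (Fin d) ℝ) {k : ℕ}
    (s : Fin k → (Fin nr → Bool) × (Fin nf → Bool)) : Matrix (Fin d) (Fin d) ℝ :=
  (List.ofFn fun i => Jop η α B HR HF (s i)).reverse.prod

/-- `E‖w_k‖² = E Tr(W_k W_kᵀ)`, the expectation taken over the i.i.d. Bernoulli
batch selections of the `k` steps. -/
def Ewk2 {d nr nf : ℕ} (η α : ℝ) (B : ℕ) (HR : Fin nr → Matrix (Fin d) (Fin d) ℝ)
    (HF : Fin nf → Matrix (Fin d) (Fin d) ℝ) (k : ℕ) : ℝ :=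
  ∑ s : Fin k → (Fin nr → Bool) × (Fin nf → Bool),
    (∏ i, selProb nr B (s i).1 * selProb nf B (s i).2) *
      (Wk η α B HR HF s * (Wk η α B HR HF s)ᵀ).trace

/-- `E[(e₁ᵀ w_k)²]`, i.e. the `(i0,i0)` entry of `E[W_k W_kᵀ]`. -/
def Ee1 {d nr nf : ℕ} (η α : ℝ) (B : ℕ) (HR : Fin nr → Matrix (Fin d) (Fin d) ℝ)
    (HF : Fin nf → Matrix (Fin d) (Fin d) ℝ) (i0 : Fin d) (k : ℕ) : ℝ :=
  ∑ s : Fin k → (Fin nr → Bool) × (Fin nf → Bool),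
    (∏ i, selProb nr B (s i).1 * selProb nf B (s i).2) *
      ((Wk η α B HR HF s * (Wk η α B HR HF s)ᵀ) i0 i0)

/-- Mixed Hessian `D_{rf} = C'_r H_r^R + C'_f H_f^F` for a retain/forget pair. -/
def Drf {d nr nf : ℕ} (Cr' Cf' : ℝ) (HR : Fin nr → Matrix (Fin d) (Fin d) ℝ)
    (HF : Fin nf → Matrix (Fin d) (Fin d) ℝ) (p : Fin nr × Fin nf) :
    Matrix (Fin d) (Fin d) ℝ :=
  Cr' • HR p.1 + Cf' • HF p.2

/-- Mix-Hessian `D = (1/(n_r n_f)) Σ_{r,f} D_{rf}`. -/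
def Dmix {d nr nf : ℕ} (Cr' Cf' : ℝ) (HR : Fin nr → Matrix (Fin d) (Fin d) ℝ)
    (HF : Fin nf → Matrix (Fin d) (Fin d) ℝ) : Matrix (Fin d) (Fin d) ℝ :=
  ((nr : ℝ) * nf)⁻¹ • ∑ p : Fin nr × Fin nf, Drf Cr' Cf' HR HF p

/-- Mix-coherence matrix `S_{(r,f),(r',f')} = ‖D_{rf}^{1/2} D_{r'f'}^{1/2}‖_F`. -/
def Smat {d nr nf : ℕ} (Cr' Cf' : ℝ) (HR : Fin nr → Matrix (Fin d) (Fin d) ℝ)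
    (HF : Fin nf → Matrix (Fin d) (Fin d) ℝ) :
    Matrix (Fin nr × Fin nf) (Fin nr × Fin nf) ℝ :=
  Matrix.of fun p q =>
    frob (psdSqrt (Drf Cr' Cf' HR HF p) * psdSqrt (Drf Cr' Cf' HR HF q))

/-- Unlearning coherence `σ = λ_max(S) / max_{(r,f)} λ_max(D_{rf})`. -/
def cohSigma {d nr nf : ℕ} (Cr' Cf' : ℝ) (HR : Fin nr → Matrix (Fin d) (Fin d) ℝ)
    (HF : Fin nf → Matrix (Fin d) (Fin d) ℝ) : ℝ :=
  lamMax (Smat Cr' Cf' HR HF) / ⨆ p : Fin nr × Fin nf, lamMax (Drf Cr' Cf' HR HF p)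

/-- Stacked filter-weight vector of the two-layer ReLU CNN signal-plus-noise model. -/
def wvec (d mfil : ℕ) (μ ξi : Fin d → ℝ) (yi : ℝ)
    (ai bi : Bool → Fin mfil → Bool) : (Bool × Fin mfil) × Fin d → ℝ :=
  fun p =>
    ((if p.1.1 then (1 : ℝ) else -1) / mfil) *
      ((if ai p.1.1 p.1.2 then (1 : ℝ) else 0) * μ p.2 +
        (if bi p.1.1 p.1.2 then (1 : ℝ) else 0) * yi * ξi p.2)

/-- Per-sample Hessian `H_i = ℓ''_i w_i w_iᵀ` of the signal-plus-noise model. -/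
def hessCNN (d mfil : ℕ) (μ ξi : Fin d → ℝ) (yi ℓi : ℝ)
    (ai bi : Bool → Fin mfil → Bool) :
    Matrix ((Bool × Fin mfil) × Fin d) ((Bool × Fin mfil) × Fin d) ℝ :=
  ℓi • vecMulVec (wvec d mfil μ ξi yi ai bi) (wvec d mfil μ ξi yi ai bi)

/-- Mixed Hessian `D_{rf} = C'_r H_r + C'_f H_{n_r+f}` in the CNN model, with the
retain set given by the first `n_r` samples and the forget set by the last `n_f`. -/
def DrfCNN (d mfil nr nf : ℕ) (μ : Fin d → ℝ) (ξ : Fin (nr + nf) → Fin d → ℝ)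
    (y ℓ : Fin (nr + nf) → ℝ) (a b : Fin (nr + nf) → Bool → Fin mfil → Bool)
    (Cr' Cf' : ℝ) (p : Fin nr × Fin nf) :
    Matrix ((Bool × Fin mfil) × Fin d) ((Bool × Fin mfil) × Fin d) ℝ :=
  Cr' • hessCNN d mfil μ (ξ (Fin.castAdd nf p.1)) (y (Fin.castAdd nf p.1))
        (ℓ (Fin.castAdd nf p.1)) (a (Fin.castAdd nf p.1)) (b (Fin.castAdd nf p.1))
    + Cf' • hessCNN d mfil μ (ξ (Fin.natAdd nr p.2)) (y (Fin.natAdd nr p.2))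
        (ℓ (Fin.natAdd nr p.2)) (a (Fin.natAdd nr p.2)) (b (Fin.natAdd nr p.2))

/-- Mix-coherence matrix of the CNN model. -/
def SmatCNN (d mfil nr nf : ℕ) (μ : Fin d → ℝ) (ξ : Fin (nr + nf) → Fin d → ℝ)
    (y ℓ : Fin (nr + nf) → ℝ) (a b : Fin (nr + nf) → Bool → Fin mfil → Bool)
    (Cr' Cf' : ℝ) : Matrix (Fin nr × Fin nf) (Fin nr × Fin nf) ℝ :=
  Matrix.of fun p q =>
    frob (psdSqrt (DrfCNN d mfil nr nf μ ξ y ℓ a b Cr' Cf' p) *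
      psdSqrt (DrfCNN d mfil nr nf μ ξ y ℓ a b Cr' Cf' q))

-- AUX lemmas
def unlWord {d : ℕ} {L : Type*} (M : L → Matrix (Fin d) (Fin d) ℝ) :
    ∀ {k : ℕ}, (Fin k → L) → Matrix (Fin d) (Fin d) ℝ
  | 0, _ => 1
  | _+1, w => M (w 0) * unlWord M (Fin.tail w)

lemma unlWord_comp {d : ℕ} {L L' : Type*} (M : L → Matrix (Fin d) (Fin d) ℝ) (g : L' → L) :
    ∀ {k : ℕ} (w : Fin k → L'), unlWord (M ∘ g) w = unlWord M (g ∘ w)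
  | 0, _ => rfl
  | k+1, w => by
      show M (g (w 0)) * unlWord (M ∘ g) (Fin.tail w) = _
      rw [unlWord_comp M g (Fin.tail w)]
      rfl

lemma unl_sum_pow {d : ℕ} {L : Type*} [Fintype L] (M : L → Matrix (Fin d) (Fin d) ℝ) :
    ∀ k : ℕ, (∑ s, M s) ^ k = ∑ w : Fin k → L, unlWord M w := by
  intro k
  induction k with
  | zero => simp [unlWord, Finset.sum_const]
  | succ k ih =>
      rw [pow_succ', ih, Finset.sum_mul_sum]
      have e1 : ∑ w : Fin (k+1) → L, unlWord M w
          = ∑ p : L × (Fin k → L), M p.1 * unlWord M p.2 :=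
        (Fintype.sum_equiv (Fin.consEquiv fun _ => L) _ _
          (fun p => by simp [unlWord, Fin.consEquiv])).symm
      rw [e1, Fintype.sum_prod_type]

lemma unl_trace_sq_le {d : ℕ} (A : Matrix (Fin d) (Fin d) ℝ) :
    A.trace ^ 2 ≤ (d : ℝ) * (A * Aᵀ).trace := by
  have h1 : (A * Aᵀ).trace = ∑ i, ∑ j, (A i j) ^ 2 := by
    simp [Matrix.trace, Matrix.mul_apply, Matrix.diag, sq]
  have h2 : A.trace = ∑ i, A i i := by simp [Matrix.trace, Matrix.diag]
  rw [h1, h2]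
  calc (∑ i, A i i) ^ 2 ≤ (Fintype.card (Fin d) : ℝ) * ∑ i, (A i i) ^ 2 := by
        simpa using sq_sum_le_card_mul_sum_sq (s := (univ : Finset (Fin d))) (f := fun i => A i i)
    _ ≤ (d : ℝ) * ∑ i, ∑ j, (A i j) ^ 2 := by
        simp only [Fintype.card_fin]
        gcongr with i _
        exact Finset.single_le_sum (f := fun j => (A i j)^2) (fun j _ => sq_nonneg _)
          (mem_univ i)

lemma unl_Nmat_word {d nr nf : ℕ} (η α : ℝ) (B : ℕ)
    (HR : Fin nr → Matrix (Fin d) (Fin d) ℝ) (HF : Fin nf → Matrix (Fin d) (Fin d) ℝ)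
    (cr cf : ℝ) (hcr : cr * cr = Crc η α B nr) (hcf : cf * cf = Cfc η α B nf)
    (hHR : ∀ r, (HR r)ᵀ = HR r) (hHF : ∀ f, (HF f)ᵀ = HF f) :
    ∀ k, Nmat η α B HR HF k
      = ∑ w : Fin k → (Fin nr ⊕ Fin nf),
          unlWord (Sum.elim (fun r => cr • HR r) (fun f => cf • HF f)) w *
          (unlWord (Sum.elim (fun r => cr • HR r) (fun f => cf • HF f)) w)ᵀ := by
  set M : Fin nr ⊕ Fin nf → Matrix (Fin d) (Fin d) ℝ :=
    Sum.elim (fun r => cr • HR r) (fun f => cf • HF f) with hM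
  intro k
  induction k with
  | zero => simp [Nmat, unlWord, Finset.sum_const]
  | succ k ih =>
      have e1 : ∑ w : Fin (k+1) → (Fin nr ⊕ Fin nf), unlWord M w * (unlWord M w)ᵀ
          = ∑ p : (Fin nr ⊕ Fin nf) × (Fin k → Fin nr ⊕ Fin nf),
              (M p.1 * unlWord M p.2) * (M p.1 * unlWord M p.2)ᵀ :=
        (Fintype.sum_equiv (Fin.consEquiv fun _ => (Fin nr ⊕ Fin nf)) _ _
          (fun p => by simp [unlWord, Fin.consEquiv])).symm
      rw [e1, Fintype.sum_prod_type]
      have e2 : ∀ s : Fin nr ⊕ Fin nf,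
          ∑ w : Fin k → Fin nr ⊕ Fin nf, (M s * unlWord M w) * (M s * unlWord M w)ᵀ
          = M s * Nmat η α B HR HF k * (M s)ᵀ := by
        intro s
        rw [ih, Finset.mul_sum, Finset.sum_mul]
        congr 1; ext w : 1
        simp only [transpose_mul]
        noncomm_ring
      simp only [e2]
      rw [Fintype.sum_sum_type]
      have er : ∀ r, M (Sum.inl r) * Nmat η α B HR HF k * (M (Sum.inl r))ᵀ
          = Crc η α B nr • (HR r * Nmat η α B HR HF k * HR r) := by
        intro r
        simp only [hM, Sum.elim_inl, transpose_smul, hHR r, smul_mul_assoc, mul_smul_comm,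
          smul_smul, hcr]
      have ef : ∀ f, M (Sum.inr f) * Nmat η α B HR HF k * (M (Sum.inr f))ᵀ
          = Cfc η α B nf • (HF f * Nmat η α B HR HF k * HF f) := by
        intro f
        simp only [hM, Sum.elim_inr, transpose_smul, hHF f, smul_mul_assoc, mul_smul_comm,
          smul_smul, hcf]
      simp only [er, ef, ← Finset.smul_sum]
      show Nmat η α B HR HF (k+1) = _
      rw [Nmat]
      abel

/-- coherence lower bound on the noise accumulation.  For every
`k ≥ 1`,
`Tr(N_k) ≥ (1/(n_r n_f))² (1/d) 2^{−k} (√C_r + √C_f)^{2k} (Σ_{r,f} Tr(D_{rf}^k))²`. -/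
theorem stmt11 (d nr nf B : ℕ) (hd : 1 ≤ d) (hnr : 1 ≤ nr) (hnf : 1 ≤ nf)
    (hB : 0 < B) (hBr : B ≤ nr) (hBf : B ≤ nf)
    (η α : ℝ) (hη : 0 < η) (hα : α ∈ Set.Icc (0 : ℝ) 1)
    (HR : Fin nr → Matrix (Fin d) (Fin d) ℝ) (HF : Fin nf → Matrix (Fin d) (Fin d) ℝ)
    (hHR : ∀ r, (HR r).PosSemidef) (hHF : ∀ f, (HF f).PosSemidef)
    (hpos : 0 < Real.sqrt (Crc η α B nr) + Real.sqrt (Cfc η α B nf)) :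
    let Cr' : ℝ := Real.sqrt (Crc η α B nr) /
      (Real.sqrt (Crc η α B nr) + Real.sqrt (Cfc η α B nf))
    let Cf' : ℝ := Real.sqrt (Cfc η α B nf) /
      (Real.sqrt (Crc η α B nr) + Real.sqrt (Cfc η α B nf))
    ∀ k, 1 ≤ k →
      (((nr : ℝ) * nf)⁻¹) ^ 2 * (d : ℝ)⁻¹ * (2 : ℝ)⁻¹ ^ k *
          (Real.sqrt (Crc η α B nr) + Real.sqrt (Cfc η α B nf)) ^ (2 * k) *
          (∑ p : Fin nr × Fin nf, ((Drf Cr' Cf' HR HF p) ^ k).trace) ^ 2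
        ≤ (Nmat η α B HR HF k).trace := by
  intro Cr' Cf' k _
  -- notation
  set cr := Real.sqrt (Crc η α B nr) with hcr
  set cf := Real.sqrt (Cfc η α B nf) with hcf
  set c := cr + cf with hc
  have hc0 : c ≠ 0 := ne_of_gt hpos
  -- nonnegativity of Crc, Cfc
  have hBpos : (0:ℝ) < B := by exact_mod_cast hB
  have hCr0 : 0 ≤ Crc η α B nr := by
    have h1 : ((nr:ℝ))⁻¹ ≤ (B:ℝ)⁻¹ := by
      apply inv_anti₀ hBpos; exact_mod_cast hBr
    have : (0:ℝ) ≤ (B:ℝ)⁻¹ - (nr:ℝ)⁻¹ := by linarith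
    unfold Crc; positivity
  have hCf0 : 0 ≤ Cfc η α B nf := by
    have h1 : ((nf:ℝ))⁻¹ ≤ (B:ℝ)⁻¹ := by
      apply inv_anti₀ hBpos; exact_mod_cast hBf
    have : (0:ℝ) ≤ (B:ℝ)⁻¹ - (nf:ℝ)⁻¹ := by linarith
    unfold Cfc; positivity
  have hcrsq : cr * cr = Crc η α B nr := Real.mul_self_sqrt hCr0
  have hcfsq : cf * cf = Cfc η α B nf := Real.mul_self_sqrt hCf0
  have hHRt : ∀ r, (HR r)ᵀ = HR r := fun r => by
    have := (hHR r).1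
    rwa [Matrix.IsHermitian, conjTranspose_eq_transpose_of_trivial] at this
  have hHFt : ∀ f, (HF f)ᵀ = HF f := fun f => by
    have := (hHF f).1
    rwa [Matrix.IsHermitian, conjTranspose_eq_transpose_of_trivial] at this
  set M : Fin nr ⊕ Fin nf → Matrix (Fin d) (Fin d) ℝ :=
    Sum.elim (fun r => cr • HR r) (fun f => cf • HF f) with hM
  set t : (Fin k → Fin nr ⊕ Fin nf) → ℝ := fun w => (unlWord M w).trace with ht
  -- the index-selection map
  set g : Fin nr × Fin nf → Bool → Fin nr ⊕ Fin nf :=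
    fun p b => if b then Sum.inl p.1 else Sum.inr p.2 with hg
  set φ : (Fin nr × Fin nf) × (Fin k → Bool) → (Fin k → Fin nr ⊕ Fin nf) :=
    fun q => g q.1 ∘ q.2 with hφ
  -- Step 1 : c^k • Drf p ^ k expands into words
  have step1 : ∀ p : Fin nr × Fin nf,
      c ^ k * ((Drf Cr' Cf' HR HF p) ^ k).trace
        = ∑ ε : Fin k → Bool, t (g p ∘ ε) := by
    intro p
    have hD : c • Drf Cr' Cf' HR HF p = ∑ b : Bool, (M ∘ g p) b := by
      rw [Fintype.sum_bool]
      show c • (Cr' • HR p.1 + Cf' • HF p.2) = M (Sum.inl p.1) + M (Sum.inr p.2)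
      simp only [hM, Sum.elim_inl, Sum.elim_inr, smul_add, smul_smul]
      rw [show c * Cr' = cr by rw [show Cr' = cr / c from rfl]; field_simp, show c * Cf' = cf by rw [show Cf' = cf / c from rfl]; field_simp]
    have := congrArg (fun X => X ^ k) hD
    simp only [smul_pow] at this
    rw [unl_sum_pow] at this
    have htr := congrArg Matrix.trace this
    rw [Matrix.trace_smul, Matrix.trace_sum] at htr
    simp only [smul_eq_mul] at htr
    rw [htr]
    congr 1
    ext ε
    rw [unlWord_comp M (g p) ε]
  -- Step 2 : sum over all pairs
  have step2 : ∑ q : (Fin nr × Fin nf) × (Fin k → Bool), t (φ q)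
      = c ^ k * ∑ p : Fin nr × Fin nf, ((Drf Cr' Cf' HR HF p) ^ k).trace := by
    rw [Fintype.sum_prod_type, Finset.mul_sum]
    exact Finset.sum_congr rfl fun p _ => (step1 p).symm
  -- Step 3 : Cauchy-Schwarz
  have card3 : (Fintype.card ((Fin nr × Fin nf) × (Fin k → Bool)) : ℝ)
      = (nr : ℝ) * nf * 2 ^ k := by
    simp [Fintype.card_prod, Fintype.card_fun]
  have step3 : (∑ q : (Fin nr × Fin nf) × (Fin k → Bool), t (φ q)) ^ 2
      ≤ ((nr:ℝ) * nf * 2 ^ k) * ∑ q : (Fin nr × Fin nf) × (Fin k → Bool), t (φ q) ^ 2 := by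
    have := sq_sum_le_card_mul_sum_sq
      (s := (univ : Finset ((Fin nr × Fin nf) × (Fin k → Bool)))) (f := fun q => t (φ q))
    rw [← card3]
    simpa using this
  -- Step 4 : fiber counting
  have fiber : ∀ w : Fin k → Fin nr ⊕ Fin nf,
      (#{q : (Fin nr × Fin nf) × (Fin k → Bool) | φ q = w} : ℕ) ≤ nr * nf := by
    intro w
    have : #{q : (Fin nr × Fin nf) × (Fin k → Bool) | φ q = w}
        ≤ #(univ : Finset (Fin nr × Fin nf)) := by
      apply Finset.card_le_card_of_injOn (fun q => q.1) (fun _ _ => mem_univ _)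
      intro q1 h1 q2 h2 hfst
      have hf : q1.1 = q2.1 := hfst
      have h1' : φ q1 = w := (Finset.mem_filter.mp h1).2
      have h2' : φ q2 = w := (Finset.mem_filter.mp h2).2
      have hq : q1.2 = q2.2 := by
        funext i
        have e1 : g q1.1 (q1.2 i) = g q2.1 (q2.2 i) :=
          congrFun (h1'.trans h2'.symm) i
        rw [hf] at e1
        cases b1 : q1.2 i <;> cases b2 : q2.2 i <;>
          rw [b1, b2] at e1 <;> rw [hg] at e1 <;> simp at e1 ⊢
      exact Prod.ext hf hq
    simpa using this
  have step4 : ∑ q : (Fin nr × Fin nf) × (Fin k → Bool), t (φ q) ^ 2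
      ≤ ((nr:ℝ) * nf) * ∑ w : Fin k → Fin nr ⊕ Fin nf, t w ^ 2 := by
    rw [Finset.sum_comp (fun w => t w ^ 2) φ]
    calc ∑ w ∈ univ.image φ, #{q | φ q = w} • t w ^ 2
        ≤ ∑ w ∈ univ.image φ, ((nr:ℝ) * nf) * t w ^ 2 := by
          apply Finset.sum_le_sum
          intro w _
          rw [nsmul_eq_mul]
          apply mul_le_mul_of_nonneg_right _ (sq_nonneg _)
          calc (#{q | φ q = w} : ℝ) ≤ ((nr * nf : ℕ) : ℝ) := by exact_mod_cast fiber w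
            _ = (nr:ℝ) * nf := by push_cast; ring
      _ ≤ ((nr:ℝ) * nf) * ∑ w : Fin k → Fin nr ⊕ Fin nf, t w ^ 2 := by
          rw [← Finset.mul_sum]
          apply mul_le_mul_of_nonneg_left _ (by positivity)
          apply Finset.sum_le_sum_of_subset_of_nonneg (Finset.subset_univ _)
          intro _ _ _; positivity
  -- Step 5 : trace bound
  have step5 : ∑ w : Fin k → Fin nr ⊕ Fin nf, t w ^ 2
      ≤ (d : ℝ) * (Nmat η α B HR HF k).trace := by
    rw [unl_Nmat_word η α B HR HF cr cf hcrsq hcfsq hHRt hHFt k, Matrix.trace_sum,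
      Finset.mul_sum]
    apply Finset.sum_le_sum
    intro w _
    exact unl_trace_sq_le (unlWord M w)
  -- assemble
  set S := ∑ p : Fin nr × Fin nf, ((Drf Cr' Cf' HR HF p) ^ k).trace with hS
  set TrN := (Nmat η α B HR HF k).trace with hTrN
  have key : (c ^ k * S) ^ 2 ≤ (((nr:ℝ) * nf) ^ 2 * 2 ^ k * d) * TrN := by
    calc (c ^ k * S) ^ 2 = (∑ q : (Fin nr × Fin nf) × (Fin k → Bool), t (φ q)) ^ 2 := by
          rw [step2]
      _ ≤ ((nr:ℝ) * nf * 2 ^ k) * ∑ q, t (φ q) ^ 2 := step3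
      _ ≤ ((nr:ℝ) * nf * 2 ^ k) * (((nr:ℝ) * nf) * ∑ w, t w ^ 2) := by
          apply mul_le_mul_of_nonneg_left step4 (by positivity)
      _ ≤ ((nr:ℝ) * nf * 2 ^ k) * (((nr:ℝ) * nf) * ((d : ℝ) * TrN)) := by
          apply mul_le_mul_of_nonneg_left _ (by positivity)
          apply mul_le_mul_of_nonneg_left step5 (by positivity)
      _ = (((nr:ℝ) * nf) ^ 2 * 2 ^ k * d) * TrN := by ring
  have hA : (0:ℝ) < ((nr:ℝ) * nf) ^ 2 * 2 ^ k * d := by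
    have h1 : (0:ℝ) < nr := by exact_mod_cast hnr
    have h2 : (0:ℝ) < nf := by exact_mod_cast hnf
    have h3 : (0:ℝ) < d := by exact_mod_cast hd
    positivity
  have lhs_eq : (((nr : ℝ) * nf)⁻¹) ^ 2 * (d : ℝ)⁻¹ * (2 : ℝ)⁻¹ ^ k * c ^ (2 * k) * S ^ 2
      = (((nr:ℝ) * nf) ^ 2 * 2 ^ k * d)⁻¹ * (c ^ k * S) ^ 2 := by
    rw [pow_mul', inv_pow (2:ℝ) k]
    field_simp
  rw [lhs_eq, inv_mul_le_iff₀ hA]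
  calc (c ^ k * S) ^ 2 ≤ (((nr:ℝ) * nf) ^ 2 * 2 ^ k * d) * TrN := key
    _ = ((nr:ℝ) * nf) ^ 2 * 2 ^ k * d * TrN := by ring

end
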